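/- The only non-singular matrix in M_n(ℤ) that is an s-th power in M_n(ℤ) for every positive integer s is the identity matrix. -/

import Mathlib

theorem stmt_0 (n : ℕ) (A : Matrix (Fin n) (Fin n) ℤ) (hA : A.det ≠ 0)
    (h : ∀ s : ℕ, 0 < s → ∃ B : Matrix (Fin n) (Fin n) ℤ, B ^ s = A) :
    A = 1 := by
  -- Step 1: det A = ±1
  have hdet : A.det.natAbs = 1 := by
    set k := A.det.natAbs with hk
    obtain ⟨B, hB⟩ := h (k + 1) (Nat.succ_pos _)
    have h1 : B.det.natAbs ^ (k + 1) = k := by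
      rw [← Int.natAbs_pow, ← Matrix.det_pow, hB]
    rcases Nat.lt_or_ge B.det.natAbs 2 with hb | hb
    · interval_cases hb' : B.det.natAbs
      · simp at h1
        exact absurd (Int.natAbs_eq_zero.mp h1.symm) hA
      · simpa using h1.symm
    · exfalso
      have h2 : 2 ^ (k + 1) ≤ B.det.natAbs ^ (k + 1) := Nat.pow_le_pow_left hb _
      have h3 : k < 2 ^ (k + 1) := (Nat.lt_two_pow_self (n := k)) |>.trans_le (Nat.pow_le_pow_right (by norm_num) (Nat.le_succ _))
      omega
  -- Step 2: A ≡ 1 mod every m+2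
  have key : ∀ m : ℕ, (Int.castRingHom (ZMod (m + 2))).mapMatrix A = 1 := by
    intro m
    set s := Fintype.card (Matrix (Fin n) (Fin n) (ZMod (m + 2)))ˣ with hs
    have hspos : 0 < s := Fintype.card_pos
    obtain ⟨B, hB⟩ := h s hspos
    have hBdet : IsUnit B.det := by
      rw [Int.isUnit_iff_natAbs_eq]
      have h1 : B.det.natAbs ^ s = 1 := by
        rw [← Int.natAbs_pow, ← Matrix.det_pow, hB, hdet]
      rcases Nat.lt_or_ge B.det.natAbs 2 with hb | hb
      · have h0 : B.det.natAbs ≠ 0 := by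
          intro h0
          rw [h0, Nat.zero_pow hspos] at h1
          exact one_ne_zero h1.symm
        omega
      · exfalso
        have h2 : 2 ^ s ≤ B.det.natAbs ^ s := Nat.pow_le_pow_left hb _
        have h3 : 1 < 2 ^ s := Nat.one_lt_two_pow hspos.ne'
        omega
    set f : Matrix (Fin n) (Fin n) ℤ →+* Matrix (Fin n) (Fin n) (ZMod (m + 2)) :=
      (Int.castRingHom (ZMod (m + 2))).mapMatrix with hf
    have hdeteq : ((B.det : ℤ) : ZMod (m + 2)) = (f B).det :=
      (Int.castRingHom (ZMod (m + 2))).map_det B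
    have hMdet : IsUnit (f B).det := hdeteq ▸ hBdet.map (Int.castRingHom (ZMod (m + 2)))
    obtain ⟨u, hu⟩ := (Matrix.isUnit_iff_isUnit_det _).mpr hMdet
    have hpow : (f B) ^ s = 1 := by
      rw [← hu, ← Units.val_pow_eq_pow_val, pow_card_eq_one, Units.val_one]
    rw [← hB, map_pow, hpow]
  -- Step 3: conclude
  ext i j
  set e : ℤ := A i j - (1 : Matrix (Fin n) (Fin n) ℤ) i j with he
  have hdvd : ∀ m : ℕ, ((m + 2 : ℕ) : ℤ) ∣ e := by
    intro m
    have h1 := key m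
    have h2 : ((A i j : ℤ) : ZMod (m + 2)) = (((1 : Matrix (Fin n) (Fin n) ℤ) i j : ℤ) : ZMod (m + 2)) := by
      have := congrFun (congrFun h1 i) j
      simp only [RingHom.mapMatrix_apply, Matrix.map_apply, Int.coe_castRingHom] at this
      rw [this, Matrix.one_apply]
      simp [Matrix.one_apply, apply_ite (Int.cast : ℤ → ZMod (m + 2))]
    rw [← ZMod.intCast_zmod_eq_zero_iff_dvd]
    rw [he]
    push_cast
    rw [h2]
    ring
  have : e = 0 := by
    by_contra h0
    have hpos : 0 < e.natAbs := Int.natAbs_pos.mpr h0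
    have hd : e.natAbs + 2 ∣ e.natAbs := Int.natCast_dvd.mp (hdvd e.natAbs)
    have := Nat.le_of_dvd hpos hd
    omega
  have := sub_eq_zero.mp this
  exact this
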